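/- Let X₀ ⊆ X, x₀ ∈ X₀, η ∈ (0,1), and ε ∈ (0,1/2) be such that (i) ρ = R|_{X₀}/M > 1, (ii) π(x₀) ≥ η, and (iii) π(X₀) ≥ 1 − ε²·η²/5. Then τ_{x₀}(P₀^lazy, ε) ≤ c(ρ)·M·log(1/(2·ε²·η²)). -/

import Mathlib

open Finset

noncomputable section

variable {X : Type*}

/-- Total variation distance between two (finitely supported) distributions. -/
def tvDist [Fintype X] (ζ μ : X → ℝ) : ℝ :=
  ⨆ A : Finset X, |∑ a ∈ A, ζ a - ∑ a ∈ A, μ a|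

/-- The lazy version `(P + I)/2` of a transition matrix. -/
def lazyM [Fintype X] [DecidableEq X] (P : Matrix X X ℝ) : Matrix X X ℝ :=
  (2 : ℝ)⁻¹ • (P + 1)

/-- Mixing time started from `x`. -/
def mixTimeFrom [Fintype X] [DecidableEq X] (P : Matrix X X ℝ) (μ : X → ℝ) (ε : ℝ) (x : X) : ℕ :=
  sInf {t : ℕ | tvDist (fun y => (P ^ t) x y) μ ≤ ε}

/-- Worst-case mixing time. -/
def mixTime [Fintype X] [DecidableEq X] (P : Matrix X X ℝ) (μ : X → ℝ) (ε : ℝ) : ℕ :=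
  Finset.univ.sup (mixTimeFrom P μ ε)

/-- Variational spectral gap of a reversible transition matrix. -/
def specGap [Fintype X] (P : Matrix X X ℝ) (μ : X → ℝ) : ℝ :=
  sInf { r : ℝ | ∃ f : X → ℝ,
    (2⁻¹ * ∑ x, ∑ y, (f x - f y) ^ 2 * μ x * μ y) ≠ 0 ∧
    r = (2⁻¹ * ∑ x, ∑ y, (f x - f y) ^ 2 * P x y * μ x) /
        (2⁻¹ * ∑ x, ∑ y, (f x - f y) ^ 2 * μ x * μ y) }

/-- Restricted spectral gap on `X0`. -/
def restGap [Fintype X] (P : Matrix X X ℝ) (μ : X → ℝ) (X0 : Finset X) : ℝ :=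
  sInf { r : ℝ | ∃ f : X → ℝ,
    0 < (∑ x ∈ X0, ∑ y ∈ X0, (f x - f y) ^ 2 * μ x * μ y) ∧
    r = (∑ x ∈ X0, ∑ y ∈ X0, (f x - f y) ^ 2 * P x y * μ x) /
        (∑ x ∈ X0, ∑ y ∈ X0, (f x - f y) ^ 2 * μ x * μ y) }

/-- `c(ρ) = 4 / (1 - ρ^{-1/2})³`. -/
def cFun (ρ : ℝ) : ℝ := 4 / (1 - ρ ^ (-(2 : ℝ)⁻¹)) ^ 3

/-- Maximum neighborhood size. -/
def Mmax [Fintype X] (N : X → Finset X) : ℕ := Finset.univ.sup fun x => (N x).card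

/-- Minimal value of `π`. -/
def piMin [Fintype X] [Nonempty X] (π : X → ℝ) : ℝ := ⨅ x, π x

/-- `R = min_{x ≠ x*} max_{y ∈ N(x)} π(y)/π(x)`. -/
def Rval [Fintype X] (π : X → ℝ) (N : X → Finset X) (xstar : X) : ℝ :=
  sInf ((fun x => sSup ((fun y => π y / π x) '' (N x : Set X))) '' {x | x ≠ xstar})

/-- Restricted `R|_{X₀}`. -/
def RvalRes [Fintype X] [DecidableEq X] (π : X → ℝ) (N : X → Finset X) (X0 : Finset X)
    (x0star : X) : ℝ :=
  sInf ((fun x => sSup ((fun y => π y / π x) '' ((N x ∩ X0 : Finset X) : Set X))) ''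
    {x | x ∈ X0 ∧ x ≠ x0star})

/-- Random walk Metropolis–Hastings transition matrix. -/
def rwMH [Fintype X] [DecidableEq X] (π : X → ℝ) (N : X → Finset X) : Matrix X X ℝ :=
  Matrix.of fun x y =>
    if y ∈ N x then min (((N x).card : ℝ))⁻¹ (π y / (π x * ((N y).card : ℝ)))
    else if y = x then
      1 - ∑ z ∈ N x, min (((N x).card : ℝ))⁻¹ (π z / (π x * ((N z).card : ℝ)))
    else 0

/-- The clipping function `clip(u, ℓ, L)`. -/
def clip (l L u : ℝ) : ℝ := if u < l then l else if u ≤ L then u else L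

/-- Normalizing constant of the informed proposal. -/
def Zh [Fintype X] (π : X → ℝ) (N : X → Finset X) (l L : ℝ) (x : X) : ℝ :=
  ∑ y ∈ N x, clip l L (π y / π x)

/-- Informed proposal kernel. -/
def Kh [Fintype X] [DecidableEq X] (π : X → ℝ) (N : X → Finset X) (l L : ℝ) (x y : X) : ℝ :=
  (if y ∈ N x then clip l L (π y / π x) else 0) / Zh π N l L x

/-- Informed Metropolis–Hastings transition matrix. -/
def infMH [Fintype X] [DecidableEq X] (π : X → ℝ) (N : X → Finset X) (l L : ℝ) :
    Matrix X X ℝ :=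
  Matrix.of fun x y =>
    if y = x then
      1 - ∑ z ∈ Finset.univ.erase x,
        Kh π N l L x z * min 1 ((π z * Kh π N l L z x) / (π x * Kh π N l L x z))
    else Kh π N l L x y * min 1 ((π y * Kh π N l L y x) / (π x * Kh π N l L x y))

/-- List of consecutive edges of a list of vertices. -/
def edgeList : List X → List (X × X)
  | a :: b :: rest => (a, b) :: edgeList (b :: rest)
  | _ => []

/-- `γ` is a path from `x` to `y` (x ≠ y) with all edges in `E` and no repeated edge. -/
def IsPathIn (E : Finset (X × X)) (x y : X) (γ : List X) : Prop :=
  x ≠ y ∧ γ.head? = some x ∧ γ.getLast? = some y ∧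
    (∀ e ∈ edgeList γ, e ∈ E) ∧ (edgeList γ).Nodup

/-- `Φ(x,y) = Σ_{γ ∈ Γ_E(x,y)} φ(γ)`. -/
def flowBetween (E : Finset (X × X)) (φ : List X → ℝ) (x y : X) : ℝ :=
  ∑' γ : {γ : List X // IsPathIn E x y γ}, φ γ

/-- Flow from `x` to `y` through the edge `e`. -/
def flowBetweenThrough (E : Finset (X × X)) (φ : List X → ℝ) (x y : X) (e : X × X) : ℝ :=
  ∑' γ : {γ : List X // IsPathIn E x y γ ∧ e ∈ edgeList γ}, φ γ

/-- `w`-length of a path. -/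
def wlen (w : X × X → ℝ) (γ : List X) : ℝ := ((edgeList γ).map w).sum

/-- Congestion `A(E, w, φ)`. -/
def congestion [Fintype X] (π : X → ℝ) (P : Matrix X X ℝ) (E : Finset (X × X))
    (w : X × X → ℝ) (φ : List X → ℝ) : ℝ :=
  ⨆ e ∈ E,
    (∑' γ : {γ : List X // (∃ x y, IsPathIn E x y γ) ∧ e ∈ edgeList γ}, wlen w γ * φ γ) /
      (π e.1 * P e.1 e.2 * w e)

/-- `N_S(x) = {x' ∈ N(x) : π(x')/π(x) ≥ S}`. -/
def NS [Fintype X] (π : X → ℝ) (N : X → Finset X) (S : ℝ) (x : X) : Finset X :=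
  (N x).filter fun y => S ≤ π y / π x

/-- Edge set `E_S`. -/
def ES [Fintype X] [DecidableEq X] (π : X → ℝ) (N : X → Finset X) (S : ℝ) : Finset (X × X) :=
  Finset.univ.filter fun e => e.1 ∈ NS π N S e.2 ∨ e.2 ∈ NS π N S e.1

/-- Restricted `N|^S_{X₀}(x)`. -/
def NSres [Fintype X] [DecidableEq X] (π : X → ℝ) (N : X → Finset X) (X0 : Finset X) (S : ℝ)
    (x : X) : Finset X :=
  ((N x) ∩ X0).filter fun y => S ≤ π y / π x

/-- Restricted edge set `E_S⁰`. -/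
def ESres [Fintype X] [DecidableEq X] (π : X → ℝ) (N : X → Finset X) (X0 : Finset X)
    (S : ℝ) : Finset (X × X) :=
  Finset.univ.filter fun e =>
    (e.1 ∈ X0 ∧ e.2 ∈ X0) ∧ (e.1 ∈ NSres π N X0 S e.2 ∨ e.2 ∈ NSres π N X0 S e.1)

end

section StmtSixAux

set_option linter.unusedSectionVars false

open Finset

variable {X : Type*} [Fintype X] [DecidableEq X]

private lemma geom_sum_le_inv' {s : ℝ} (h0 : 0 ≤ s) (h1 : s < 1) (n : ℕ) :
    ∑ i ∈ Finset.range n, s ^ i ≤ (1 - s)⁻¹ := by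
  have h2 : (0:ℝ) < 1 - s := by linarith
  have h3 := geom_sum_mul s n
  have h5 : (0:ℝ) ≤ s ^ n := pow_nonneg h0 n
  rw [inv_eq_one_div, le_div_iff₀ h2]
  nlinarith [h3]

private lemma pair_expand' (T : Finset X) (p A : X → ℝ) :
    ∑ x ∈ T, ∑ y ∈ T, (A x - A y) ^ 2 * p x * p y
      = 2 * (∑ x ∈ T, p x) * (∑ x ∈ T, p x * A x ^ 2) - 2 * (∑ x ∈ T, p x * A x) ^ 2 := by
  have h1 : ∀ x ∈ T, ∑ y ∈ T, (A x - A y) ^ 2 * p x * p y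
      = (p x * A x ^ 2) * (∑ y ∈ T, p y) + ((p x * A x) * (-2)) * (∑ y ∈ T, p y * A y)
        + p x * (∑ y ∈ T, p y * A y ^ 2) := by
    intro x _
    rw [Finset.mul_sum, Finset.mul_sum, Finset.mul_sum, ← Finset.sum_add_distrib,
      ← Finset.sum_add_distrib]
    exact Finset.sum_congr rfl fun y _ => by ring
  rw [Finset.sum_congr rfl h1, Finset.sum_add_distrib, Finset.sum_add_distrib,
    ← Finset.sum_mul, ← Finset.sum_mul, ← Finset.sum_mul, ← Finset.sum_mul]
  ring

private lemma stat_of_rev (π : X → ℝ) (P : Matrix X X ℝ)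
    (hrow : ∀ x, ∑ y, P x y = 1) (hrev : ∀ x y, π x * P x y = π y * P y x) (y : X) :
    ∑ x, π x * P x y = π y := by
  calc ∑ x, π x * P x y = ∑ x, π y * P y x := Finset.sum_congr rfl fun x _ => hrev x y
    _ = π y * ∑ x, P y x := by rw [Finset.mul_sum]
    _ = π y := by rw [hrow y, mul_one]

private lemma contraction' (π : X → ℝ) (hπ : ∀ x, 0 ≤ π x) (P : Matrix X X ℝ)
    (hP : ∀ x y, 0 ≤ P x y) (hrow : ∀ x, ∑ y, P x y = 1)
    (hrev : ∀ x y, π x * P x y = π y * P y x) (f : X → ℝ) :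
    ∑ y, π y * (∑ x, P y x * f x) ^ 2 ≤ ∑ x, π x * f x ^ 2 := by
  have h1 : ∀ y, (∑ x, P y x * f x) ^ 2 ≤ ∑ x, P y x * f x ^ 2 := by
    intro y
    have hCS := Finset.sum_mul_sq_le_sq_mul_sq Finset.univ (fun x => Real.sqrt (P y x))
      (fun x => Real.sqrt (P y x) * f x)
    have e1 : ∑ x, Real.sqrt (P y x) * (Real.sqrt (P y x) * f x) = ∑ x, P y x * f x :=
      Finset.sum_congr rfl fun x _ => by
        rw [← mul_assoc, Real.mul_self_sqrt (hP y x)]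
    have e2 : ∑ x, Real.sqrt (P y x) ^ 2 = 1 := by
      rw [Finset.sum_congr rfl fun x _ => Real.sq_sqrt (hP y x)]
      exact hrow y
    have e3 : ∑ x, (Real.sqrt (P y x) * f x) ^ 2 = ∑ x, P y x * f x ^ 2 :=
      Finset.sum_congr rfl fun x _ => by rw [mul_pow, Real.sq_sqrt (hP y x)]
    rw [e1, e2, e3, one_mul] at hCS
    exact hCS
  calc ∑ y, π y * (∑ x, P y x * f x) ^ 2 ≤ ∑ y, π y * ∑ x, P y x * f x ^ 2 :=
        Finset.sum_le_sum fun y _ => mul_le_mul_of_nonneg_left (h1 y) (hπ y)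
    _ = ∑ y, ∑ x, π y * P y x * f x ^ 2 := by
        exact Finset.sum_congr rfl fun y _ => by rw [Finset.mul_sum]; exact Finset.sum_congr rfl fun x _ => by ring
    _ = ∑ x, ∑ y, π y * P y x * f x ^ 2 := Finset.sum_comm
    _ = ∑ x, π x * f x ^ 2 := by
        refine Finset.sum_congr rfl fun x _ => ?_
        calc ∑ y, π y * P y x * f x ^ 2 = (∑ y, π y * P y x) * f x ^ 2 := by rw [Finset.sum_mul]
          _ = π x * f x ^ 2 := by rw [stat_of_rev π P hrow hrev x]

private lemma dirichlet_id' (π : X → ℝ) (P : Matrix X X ℝ)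
    (hrow : ∀ x, ∑ y, P x y = 1) (hrev : ∀ x y, π x * P x y = π y * P y x) (f : X → ℝ) :
    2⁻¹ * ∑ x, ∑ y, (f x - f y) ^ 2 * P x y * π x
      = ∑ y, π y * f y ^ 2 - ∑ y, π y * (∑ x, P y x * f x) * f y := by
  have hexp : ∀ x ∈ Finset.univ, ∑ y, (f x - f y) ^ 2 * P x y * π x
      = (π x * f x ^ 2) * (∑ y, P x y) + ((-2) : ℝ) * (∑ y, (π x * P x y) * (f x * f y))
        + ∑ y, (π x * P x y) * f y ^ 2 := by
    intro x _
    rw [Finset.mul_sum, Finset.mul_sum, ← Finset.sum_add_distrib, ← Finset.sum_add_distrib]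
    exact Finset.sum_congr rfl fun y _ => by ring
  rw [Finset.sum_congr rfl hexp, Finset.sum_add_distrib, Finset.sum_add_distrib]
  have p1 : ∑ x, (π x * f x ^ 2) * (∑ y, P x y) = ∑ x, π x * f x ^ 2 :=
    Finset.sum_congr rfl fun x _ => by rw [hrow x, mul_one]
  have p2 : ∑ x, ∑ y, (π x * P x y) * f y ^ 2 = ∑ y, π y * f y ^ 2 := by
    rw [Finset.sum_comm]
    refine Finset.sum_congr rfl fun y _ => ?_
    calc ∑ x, (π x * P x y) * f y ^ 2 = (∑ x, π x * P x y) * f y ^ 2 := by rw [Finset.sum_mul]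
      _ = π y * f y ^ 2 := by rw [stat_of_rev π P hrow hrev y]
  have p3 : ∑ x, ((-2) : ℝ) * (∑ y, (π x * P x y) * (f x * f y))
      = (-2) * ∑ y, π y * (∑ x, P y x * f x) * f y := by
    rw [← Finset.mul_sum]
    congr 1
    calc ∑ x, ∑ y, (π x * P x y) * (f x * f y)
        = ∑ y, ∑ x, (π x * P x y) * (f x * f y) := Finset.sum_comm
      _ = ∑ y, π y * (∑ x, P y x * f x) * f y := by
          refine Finset.sum_congr rfl fun y _ => ?_
          rw [Finset.mul_sum, Finset.sum_mul]
          refine Finset.sum_congr rfl fun x _ => ?_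
          linear_combination (f x * f y) * hrev x y
  rw [p1, p2, p3]
  ring

private lemma pow_rowsum' (P : Matrix X X ℝ) (hrow : ∀ x, ∑ y, P x y = 1) :
    ∀ (t : ℕ) (x : X), ∑ y, (P ^ t) x y = 1 := by
  intro t
  induction t with
  | zero => intro x; simp [Matrix.one_apply]
  | succ t ih =>
    intro x
    have h1 : ∀ y, (P ^ (t+1)) x y = ∑ z, (P ^ t) x z * P z y := by
      intro y; rw [pow_succ, Matrix.mul_apply]
    rw [Finset.sum_congr rfl fun y _ => h1 y, Finset.sum_comm]
    calc ∑ z, ∑ y, (P ^ t) x z * P z y = ∑ z, (P ^ t) x z * ∑ y, P z y := by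
          exact Finset.sum_congr rfl fun z _ => by rw [Finset.mul_sum]
      _ = ∑ z, (P ^ t) x z := by
          exact Finset.sum_congr rfl fun z _ => by rw [hrow z, mul_one]
      _ = 1 := ih x

private lemma rwMH_apply_mem' (π : X → ℝ) (N : X → Finset X) {x y : X} (h : y ∈ N x) :
    rwMH π N x y = min (((N x).card : ℝ))⁻¹ (π y / (π x * ((N y).card : ℝ))) := by
  simp [rwMH, h]

private lemma rwMH_nonneg' (π : X → ℝ) (hπpos : ∀ x, 0 < π x) (N : X → Finset X)
    (hNirr : ∀ x, x ∉ N x) (x y : X) : 0 ≤ rwMH π N x y := by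
  by_cases h1 : y ∈ N x
  · rw [rwMH_apply_mem' π N h1]
    have hc : (0:ℝ) ≤ (((N x).card : ℝ))⁻¹ := by positivity
    have hd : (0:ℝ) ≤ π y / (π x * ((N y).card : ℝ)) :=
      div_nonneg (hπpos y).le (mul_nonneg (hπpos x).le (by positivity))
    exact le_min hc hd
  · by_cases h2 : y = x
    · subst h2
      have hdiag : rwMH π N y y
          = 1 - ∑ z ∈ N y, min (((N y).card : ℝ))⁻¹ (π z / (π y * ((N z).card : ℝ))) := by
        simp [rwMH, hNirr y]
      rw [hdiag, sub_nonneg]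
      calc ∑ z ∈ N y, min (((N y).card : ℝ))⁻¹ (π z / (π y * ((N z).card : ℝ)))
          ≤ ∑ _z ∈ N y, (((N y).card : ℝ))⁻¹ := Finset.sum_le_sum fun z _ => min_le_left _ _
        _ = ((N y).card : ℝ) * (((N y).card : ℝ))⁻¹ := by
            rw [Finset.sum_const, nsmul_eq_mul]
        _ ≤ 1 := by
            rcases Nat.eq_zero_or_pos (N y).card with h | h
            · simp [h]
            · rw [mul_inv_cancel₀ (by exact_mod_cast h.ne' : ((N y).card : ℝ) ≠ 0)]
    · simp [rwMH, h1, h2]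

private lemma rwMH_rowsum' (π : X → ℝ) (N : X → Finset X)
    (hNirr : ∀ x, x ∉ N x) (x : X) : ∑ y, rwMH π N x y = 1 := by
  rw [← Finset.sum_subset (Finset.subset_univ (insert x (N x)))]
  · rw [Finset.sum_insert (hNirr x)]
    have h1 : rwMH π N x x
        = 1 - ∑ z ∈ N x, min (((N x).card : ℝ))⁻¹ (π z / (π x * ((N z).card : ℝ))) := by
      simp [rwMH, hNirr x]
    rw [h1, Finset.sum_congr rfl fun y hy => rwMH_apply_mem' π N hy]
    ring
  · intro y _ hy
    simp only [Finset.mem_insert, not_or] at hy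
    simp [rwMH, hy.2, hy.1]

private lemma rwMH_rev' (π : X → ℝ) (hπpos : ∀ x, 0 < π x) (N : X → Finset X)
    (hNsym : ∀ x y, y ∈ N x → x ∈ N y) (x y : X) :
    π x * rwMH π N x y = π y * rwMH π N y x := by
  by_cases hxy : y ∈ N x
  · have hyx : x ∈ N y := hNsym x y hxy
    have hcx : (0:ℝ) < ((N x).card : ℝ) := by
      exact_mod_cast Finset.card_pos.2 ⟨y, hxy⟩
    have hcy : (0:ℝ) < ((N y).card : ℝ) := by
      exact_mod_cast Finset.card_pos.2 ⟨x, hyx⟩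
    rw [rwMH_apply_mem' π N hxy, rwMH_apply_mem' π N hyx,
      mul_min_of_nonneg _ _ (hπpos x).le, mul_min_of_nonneg _ _ (hπpos y).le]
    have e1 : π y * (π x / (π y * ((N x).card : ℝ))) = π x * (((N x).card : ℝ))⁻¹ := by
      rw [← mul_div_assoc, mul_div_mul_left _ _ (hπpos y).ne', div_eq_mul_inv]
    have e2 : π x * (π y / (π x * ((N y).card : ℝ))) = π y * (((N y).card : ℝ))⁻¹ := by
      rw [← mul_div_assoc, mul_div_mul_left _ _ (hπpos x).ne', div_eq_mul_inv]
    rw [e2, e1, min_comm]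
  · by_cases hyy : y = x
    · subst hyy; rfl
    · have hxy' : x ∉ N y := fun h => hxy (hNsym y x h)
      have h1 : rwMH π N x y = 0 := by simp [rwMH, hxy, hyy]
      have hyx0 : ¬ x = y := fun h => hyy h.symm
      have h2 : rwMH π N y x = 0 := by
        simp [rwMH, hxy', hyx0]
      rw [h1, h2, mul_zero, mul_zero]

private lemma lazy_nonneg' (Q : Matrix X X ℝ) (hQ : ∀ x y, 0 ≤ Q x y) (x y : X) :
    0 ≤ lazyM Q x y := by
  simp only [lazyM, Matrix.smul_apply, Matrix.add_apply, Matrix.one_apply, smul_eq_mul]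
  have := hQ x y
  split_ifs <;> nlinarith

private lemma lazy_rowsum' (Q : Matrix X X ℝ) (hrow : ∀ x, ∑ y, Q x y = 1) (x : X) :
    ∑ y, lazyM Q x y = 1 := by
  simp only [lazyM, Matrix.smul_apply, Matrix.add_apply, smul_eq_mul]
  rw [Finset.sum_congr rfl fun y _ => (by ring :
      (2:ℝ)⁻¹ * (Q x y + (1 : Matrix X X ℝ) x y)
        = 2⁻¹ * Q x y + 2⁻¹ * (1 : Matrix X X ℝ) x y),
    Finset.sum_add_distrib, ← Finset.mul_sum, ← Finset.mul_sum, hrow x]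
  have : ∑ y, (1 : Matrix X X ℝ) x y = 1 := by simp [Matrix.one_apply]
  rw [this]
  norm_num

private lemma lazy_rev' (π : X → ℝ) (Q : Matrix X X ℝ)
    (hrev : ∀ x y, π x * Q x y = π y * Q y x) (x y : X) :
    π x * lazyM Q x y = π y * lazyM Q y x := by
  simp only [lazyM, Matrix.smul_apply, Matrix.add_apply, smul_eq_mul]
  have h1 : π x * (1 : Matrix X X ℝ) x y = π y * (1 : Matrix X X ℝ) y x := by
    rcases eq_or_ne x y with rfl | h
    · rfl
    · rw [Matrix.one_apply_ne h, Matrix.one_apply_ne h.symm, mul_zero, mul_zero]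
  have h2 := hrev x y
  nlinarith [h1, h2]

private lemma lazy_step' (π : X → ℝ) (hπ : ∀ x, 0 ≤ π x)
    (Q : Matrix X X ℝ) (hQ : ∀ x y, 0 ≤ Q x y) (hrow : ∀ x, ∑ y, Q x y = 1)
    (hrev : ∀ x y, π x * Q x y = π y * Q y x) (f : X → ℝ) :
    ∑ y, π y * (∑ x, lazyM Q y x * f x) ^ 2
      ≤ ∑ y, π y * (∑ x, lazyM Q y x * f x) * f y := by
  have hlz : ∀ y, ∑ x, lazyM Q y x * f x = ((∑ x, Q y x * f x) + f y) / 2 := by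
    intro y
    simp only [lazyM, Matrix.smul_apply, Matrix.add_apply, smul_eq_mul]
    rw [Finset.sum_congr rfl fun x _ => (by ring :
        (2:ℝ)⁻¹ * (Q y x + (1 : Matrix X X ℝ) y x) * f x
          = 2⁻¹ * (Q y x * f x) + 2⁻¹ * ((1 : Matrix X X ℝ) y x * f x)),
      Finset.sum_add_distrib, ← Finset.mul_sum, ← Finset.mul_sum]
    have : ∑ x, (1 : Matrix X X ℝ) y x * f x = f y := by
      simp [Matrix.one_apply]
    rw [this]
    ring
  have hcontr := contraction' π hπ Q hQ hrow hrev f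
  have key : ∑ y, π y * (∑ x, lazyM Q y x * f x) * f y
      - ∑ y, π y * (∑ x, lazyM Q y x * f x) ^ 2
      = (∑ y, π y * f y ^ 2 - ∑ y, π y * (∑ x, Q y x * f x) ^ 2) / 4 := by
    rw [← Finset.sum_sub_distrib, ← Finset.sum_sub_distrib, Finset.sum_div]
    refine Finset.sum_congr rfl fun y _ => ?_
    rw [hlz y]
    ring
  linarith [key, hcontr]

end StmtSixAux
section StmtSixPartA

set_option linter.unusedSectionVars false
set_option maxHeartbeats 1000000

open Finset

private lemma partA {X : Type*} [Fintype X] [DecidableEq X]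
    (π : X → ℝ) (hπpos : ∀ x, 0 < π x)
    (N : X → Finset X) (hNirr : ∀ x, x ∉ N x) (hNsym : ∀ x y, y ∈ N x → x ∈ N y)
    (X0 : Finset X) (x0star : X) (hπle1 : ∑ x ∈ X0, π x ≤ 1)
    (M : ℕ) (hMcard : ∀ x : X, (N x).card ≤ M) (hM1 : 1 ≤ M)
    (ρ s : ℝ) (hρ1 : 1 < ρ) (hs0 : 0 < s) (hs1 : s < 1) (hs2 : s ^ 2 = ρ⁻¹)
    (σ : X → X) (hσX0 : ∀ x, σ x ∈ X0)
    (hσN : ∀ x, x ∈ X0 → x ≠ x0star → σ x ∈ N x)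
    (hσg : ∀ x, x ∈ X0 → x ≠ x0star → ρ * M * π x ≤ π (σ x))
    (hσstar : σ x0star = x0star)
    (f : X → ℝ) :
    ∑ x ∈ X0, ∑ y ∈ X0, (f x - f y) ^ 2 * π x * π y ≤
      (2 * M / (1 - s) ^ 2) * ∑ x ∈ X0, ∑ y ∈ X0, (f x - f y) ^ 2 * rwMH π N x y * π x := by
  classical
  have hMR : (1:ℝ) ≤ (M:ℝ) := by exact_mod_cast hM1
  have hMR0 : (0:ℝ) < (M:ℝ) := by linarith
  have hρ0 : (0:ℝ) < ρ := by linarith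
  have hρM1 : (1:ℝ) < ρ * M := by nlinarith
  have h1s : (0:ℝ) < 1 - s := by linarith
  have hgrow' : ∀ x, x ∈ X0 → x ≠ x0star → π x < π (σ x) := by
    intro x hx hne
    have h1 := hσg x hx hne
    nlinarith [hπpos x]
  -- hitting times
  have hit : ∀ x ∈ X0, ∃ k, σ^[k] x = x0star := by
    have key : ∀ n : ℕ, ∀ x ∈ X0, (X0.filter fun y => π x < π y).card ≤ n →
        ∃ k, σ^[k] x = x0star := by
      intro n
      induction n with
      | zero =>
        intro x hx hcard
        by_cases hne : x = x0star
        · exact ⟨0, by simp [hne]⟩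
        · exfalso
          have h1 : σ x ∈ X0.filter fun y => π x < π y :=
            Finset.mem_filter.2 ⟨hσX0 x, hgrow' x hx hne⟩
          have h2 := Finset.card_pos.2 ⟨_, h1⟩
          omega
      | succ n ih =>
        intro x hx hcard
        by_cases hne : x = x0star
        · exact ⟨0, by simp [hne]⟩
        · have hsub : (X0.filter fun y => π (σ x) < π y) ⊆ (X0.filter fun y => π x < π y) := by
            intro y hy
            rw [Finset.mem_filter] at hy ⊢
            exact ⟨hy.1, lt_trans (hgrow' x hx hne) hy.2⟩
          have hss : (X0.filter fun y => π (σ x) < π y) ⊂ (X0.filter fun y => π x < π y) := by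
            refine (Finset.ssubset_iff_of_subset hsub).2 ⟨σ x, ?_, ?_⟩
            · exact Finset.mem_filter.2 ⟨hσX0 x, hgrow' x hx hne⟩
            · intro hmem
              exact absurd (Finset.mem_filter.1 hmem).2 (lt_irrefl _)
          have hlt := Finset.card_lt_card hss
          obtain ⟨k, hk⟩ := ih (σ x) (hσX0 x) (by omega)
          exact ⟨k + 1, by rw [Function.iterate_succ_apply]; exact hk⟩
    intro x hx
    exact key _ x hx le_rfl
  have hfix : ∀ i, σ^[i] x0star = x0star := fun i => Function.iterate_fixed hσstar i
  set kk : X → ℕ := fun x => if h : ∃ k, σ^[k] x = x0star then Nat.find h else 0 with hkk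
  have hkk_spec : ∀ x ∈ X0, σ^[kk x] x = x0star := by
    intro x hx
    have h := hit x hx
    simp only [hkk, dif_pos h]
    exact Nat.find_spec h
  have hkk_lt : ∀ x ∈ X0, ∀ i, i < kk x → σ^[i] x ≠ x0star := by
    intro x hx i hi
    have h := hit x hx
    simp only [hkk, dif_pos h] at hi
    exact Nat.find_min h hi
  have hkk_ge : ∀ x ∈ X0, ∀ i, σ^[i] x ≠ x0star → i < kk x := by
    intro x hx i hne
    by_contra hle
    push_neg at hle
    apply hne
    have h1 : σ^[i] x = σ^[i - kk x] (σ^[kk x] x) := by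
      rw [← Function.iterate_add_apply]
      congr 1
      omega
    rw [h1, hkk_spec x hx, hfix]
  have hiter_mem : ∀ x ∈ X0, ∀ i, σ^[i] x ∈ X0 := by
    intro x hx i
    cases i with
    | zero => simpa
    | succ n => rw [Function.iterate_succ_apply']; exact hσX0 _
  -- A6 : fiber mass bound
  have hT : ∀ i : ℕ, ∀ z, z ≠ x0star →
      ∑ x ∈ X0.filter (fun x => σ^[i] x = z), π x ≤ (ρ⁻¹) ^ i * π z := by
    intro i
    induction i with
    | zero =>
      intro z hne
      simp only [Function.iterate_zero_apply, pow_zero, one_mul]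
      have hsub : X0.filter (fun x => x = z) ⊆ {z} := by
        intro u hu
        rw [Finset.mem_filter] at hu
        simp [hu.2]
      calc ∑ x ∈ X0.filter (fun x => x = z), π x ≤ ∑ x ∈ ({z} : Finset X), π x :=
            Finset.sum_le_sum_of_subset_of_nonneg hsub (fun y _ _ => (hπpos y).le)
        _ = π z := Finset.sum_singleton _ _
    | succ i ih =>
      intro z hne
      have hmaps : ∀ x ∈ X0.filter (fun x => σ^[i+1] x = z),
          σ x ∈ X0.filter (fun x => σ^[i] x = z) := by
        intro x hx
        rw [Finset.mem_filter] at hx ⊢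
        refine ⟨hσX0 x, ?_⟩
        rw [← Function.iterate_succ_apply]
        exact hx.2
      rw [← Finset.sum_fiberwise_of_maps_to hmaps π]
      have hinner : ∀ u ∈ X0.filter (fun x => σ^[i] x = z),
          ∑ x ∈ (X0.filter (fun x => σ^[i+1] x = z)).filter (fun x => σ x = u), π x
            ≤ ρ⁻¹ * π u := by
        intro u hu
        have hbound : ∀ x ∈ (X0.filter (fun x => σ^[i+1] x = z)).filter (fun x => σ x = u),
            π x ≤ ρ⁻¹ * (M:ℝ)⁻¹ * π u := by
          intro x hx
          rw [Finset.mem_filter, Finset.mem_filter] at hx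
          obtain ⟨⟨hxX0, hxit⟩, hxσ⟩ := hx
          have hxne : x ≠ x0star := by
            intro h
            apply hne
            rw [← hxit, h, hfix]
          have hg := hσg x hxX0 hxne
          rw [hxσ] at hg
          have h2 : π x ≤ π u / (ρ * M) := by
            rw [le_div_iff₀ (by positivity)]
            nlinarith [hg]
          calc π x ≤ π u / (ρ * M) := h2
            _ = ρ⁻¹ * (M:ℝ)⁻¹ * π u := by
                rw [div_eq_mul_inv, mul_inv]
                ring
        have hsubN : (X0.filter (fun x => σ^[i+1] x = z)).filter (fun x => σ x = u) ⊆ N u := by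
          intro x hx
          rw [Finset.mem_filter, Finset.mem_filter] at hx
          obtain ⟨⟨hxX0, hxit⟩, hxσ⟩ := hx
          have hxne : x ≠ x0star := by
            intro h
            apply hne
            rw [← hxit, h, hfix]
          have := hσN x hxX0 hxne
          rw [hxσ] at this
          exact hNsym x u this
        have hcard : ((X0.filter (fun x => σ^[i+1] x = z)).filter (fun x => σ x = u)).card ≤ M :=
          le_trans (Finset.card_le_card hsubN) (hMcard u)
        calc ∑ x ∈ (X0.filter (fun x => σ^[i+1] x = z)).filter (fun x => σ x = u), π x
            ≤ ((X0.filter (fun x => σ^[i+1] x = z)).filter (fun x => σ x = u)).card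
                • (ρ⁻¹ * (M:ℝ)⁻¹ * π u) := Finset.sum_le_card_nsmul _ _ _ hbound
          _ = (((X0.filter (fun x => σ^[i+1] x = z)).filter (fun x => σ x = u)).card : ℝ)
                * (ρ⁻¹ * (M:ℝ)⁻¹ * π u) := nsmul_eq_mul _ _
          _ ≤ (M:ℝ) * (ρ⁻¹ * (M:ℝ)⁻¹ * π u) := by
              apply mul_le_mul_of_nonneg_right
              · exact_mod_cast hcard
              · have h0ρ : (0:ℝ) < ρ := by linarith
                exact mul_nonneg (mul_nonneg (by positivity) (by positivity)) (hπpos u).le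
          _ = ρ⁻¹ * π u := by
              rw [show (M:ℝ) * (ρ⁻¹ * (M:ℝ)⁻¹ * π u) = ((M:ℝ) * (M:ℝ)⁻¹) * (ρ⁻¹ * π u) by ring,
                mul_inv_cancel₀ hMR0.ne', one_mul]
      calc ∑ u ∈ X0.filter (fun x => σ^[i] x = z),
            ∑ x ∈ (X0.filter (fun x => σ^[i+1] x = z)).filter (fun x => σ x = u), π x
          ≤ ∑ u ∈ X0.filter (fun x => σ^[i] x = z), ρ⁻¹ * π u := Finset.sum_le_sum hinner
        _ = ρ⁻¹ * ∑ u ∈ X0.filter (fun x => σ^[i] x = z), π u := by rw [Finset.mul_sum]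
        _ ≤ ρ⁻¹ * ((ρ⁻¹) ^ i * π z) := by
            apply mul_le_mul_of_nonneg_left (ih z hne) (by positivity)
        _ = (ρ⁻¹) ^ (i+1) * π z := by ring
  -- A7 : weighted Cauchy-Schwarz along the path
  set d : X → ℝ := fun z => (f z - f (σ z)) ^ 2 with hd
  have hdnn : ∀ z, 0 ≤ d z := fun z => sq_nonneg _
  have hCS : ∀ x ∈ X0, (f x - f x0star) ^ 2 ≤
      (1 - s)⁻¹ * ∑ i ∈ Finset.range (kk x), (s⁻¹) ^ i * d (σ^[i] x) := by
    intro x hx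
    have htel : f x - f x0star
        = ∑ i ∈ Finset.range (kk x), (f (σ^[i] x) - f (σ^[i+1] x)) := by
      have h5 := Finset.sum_range_sub' (fun i => f (σ^[i] x)) (kk x)
      simp only [Function.iterate_zero_apply] at h5
      rw [hkk_spec x hx] at h5
      exact h5.symm
    set t : ℝ := Real.sqrt s with ht
    have ht0 : 0 < t := Real.sqrt_pos.2 hs0
    have ht2 : t ^ 2 = s := Real.sq_sqrt hs0.le
    have hisq : ∀ i : ℕ, (t ^ i) ^ 2 = s ^ i := fun i => by
      rw [← pow_mul, mul_comm, pow_mul, ht2]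
    have hCS0 := Finset.sum_mul_sq_le_sq_mul_sq (Finset.range (kk x)) (fun i => t ^ i)
      (fun i => (f (σ^[i] x) - f (σ^[i+1] x)) / t ^ i)
    have e1 : ∑ i ∈ Finset.range (kk x), (t ^ i) * ((f (σ^[i] x) - f (σ^[i+1] x)) / t ^ i)
        = ∑ i ∈ Finset.range (kk x), (f (σ^[i] x) - f (σ^[i+1] x)) :=
      Finset.sum_congr rfl fun i _ => by
        rw [mul_comm, div_mul_cancel₀ _ (pow_ne_zero i ht0.ne')]
    have e2 : ∑ i ∈ Finset.range (kk x), (t ^ i) ^ 2 = ∑ i ∈ Finset.range (kk x), s ^ i :=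
      Finset.sum_congr rfl fun i _ => hisq i
    have e3 : ∑ i ∈ Finset.range (kk x), ((f (σ^[i] x) - f (σ^[i+1] x)) / t ^ i) ^ 2
        = ∑ i ∈ Finset.range (kk x), (s⁻¹) ^ i * d (σ^[i] x) :=
      Finset.sum_congr rfl fun i _ => by
        have h5 : σ^[i+1] x = σ (σ^[i] x) := Function.iterate_succ_apply' σ i x
        rw [h5]
        show ((f (σ^[i] x) - f (σ (σ^[i] x))) / t ^ i) ^ 2
          = (s⁻¹) ^ i * (f (σ^[i] x) - f (σ (σ^[i] x))) ^ 2
        rw [div_pow, hisq i, div_eq_mul_inv, ← inv_pow]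
        ring
    rw [e1, e2, e3] at hCS0
    have h4 : (0:ℝ) ≤ ∑ i ∈ Finset.range (kk x), (s⁻¹) ^ i * d (σ^[i] x) :=
      Finset.sum_nonneg fun i _ => mul_nonneg (by positivity) (hdnn _)
    calc (f x - f x0star) ^ 2
        = (∑ i ∈ Finset.range (kk x), (f (σ^[i] x) - f (σ^[i+1] x))) ^ 2 := by rw [htel]
      _ ≤ (∑ i ∈ Finset.range (kk x), s ^ i)
            * ∑ i ∈ Finset.range (kk x), (s⁻¹) ^ i * d (σ^[i] x) := hCS0
      _ ≤ (1 - s)⁻¹ * ∑ i ∈ Finset.range (kk x), (s⁻¹) ^ i * d (σ^[i] x) :=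
          mul_le_mul_of_nonneg_right (geom_sum_le_inv' hs0.le hs1 _) h4
  -- A8 : swap sums
  set Z : Finset X := X0.erase x0star with hZ
  set W : ℝ := ∑ z ∈ Z, π z * d z with hW
  have hWnn : 0 ≤ W :=
    Finset.sum_nonneg fun z _ => mul_nonneg (hπpos z).le (hdnn z)
  set K : ℕ := X0.sup kk with hK
  have hscoef : ∀ i : ℕ, (s⁻¹) ^ i * (ρ⁻¹) ^ i = s ^ i := by
    intro i
    rw [← mul_pow, ← hs2]
    congr 1
    rw [sq]
    rw [inv_mul_cancel_left₀ hs0.ne']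
  have hB : ∑ x ∈ X0, π x * ∑ i ∈ Finset.range (kk x), (s⁻¹) ^ i * d (σ^[i] x)
      ≤ (1 - s)⁻¹ * W := by
    have hrw : ∀ x ∈ X0, π x * ∑ i ∈ Finset.range (kk x), (s⁻¹) ^ i * d (σ^[i] x)
        = ∑ i ∈ Finset.range K,
            (if σ^[i] x ≠ x0star then π x * ((s⁻¹) ^ i * d (σ^[i] x)) else 0) := by
      intro x hx
      rw [Finset.mul_sum, ← Finset.sum_filter]
      apply Finset.sum_congr
      · ext i
        simp only [Finset.mem_filter, Finset.mem_range]
        constructor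
        · intro hi
          exact ⟨lt_of_lt_of_le hi (Finset.le_sup hx), hkk_lt x hx i hi⟩
        · rintro ⟨hiK, hne⟩
          exact hkk_ge x hx i hne
      · intros; rfl
    rw [Finset.sum_congr rfl hrw, Finset.sum_comm]
    have hinner2 : ∀ i ∈ Finset.range K,
        (∑ x ∈ X0, if σ^[i] x ≠ x0star then π x * ((s⁻¹) ^ i * d (σ^[i] x)) else 0)
          ≤ s ^ i * W := by
      intro i _
      rw [Finset.sum_ite, Finset.sum_const_zero, add_zero]
      have hmaps : ∀ x ∈ X0.filter (fun x => σ^[i] x ≠ x0star), σ^[i] x ∈ Z := by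
        intro x hx
        rw [Finset.mem_filter] at hx
        exact Finset.mem_erase.2 ⟨hx.2, hiter_mem x hx.1 i⟩
      rw [← Finset.sum_fiberwise_of_maps_to hmaps _]
      have hfib : ∀ z ∈ Z,
          ∑ x ∈ (X0.filter (fun x => σ^[i] x ≠ x0star)).filter (fun x => σ^[i] x = z),
            π x * ((s⁻¹) ^ i * d (σ^[i] x)) ≤ s ^ i * (π z * d z) := by
        intro z hz
        obtain ⟨hzne, hzX0⟩ := Finset.mem_erase.1 hz
        have e4 : ∀ x ∈ (X0.filter (fun x => σ^[i] x ≠ x0star)).filter (fun x => σ^[i] x = z),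
            π x * ((s⁻¹) ^ i * d (σ^[i] x)) = π x * ((s⁻¹) ^ i * d z) := by
          intro x hx
          rw [Finset.mem_filter] at hx
          rw [hx.2]
        rw [Finset.sum_congr rfl e4, ← Finset.sum_mul]
        have hsub2 : (X0.filter (fun x => σ^[i] x ≠ x0star)).filter (fun x => σ^[i] x = z)
            ⊆ X0.filter (fun x => σ^[i] x = z) := by
          intro u hu
          rw [Finset.mem_filter, Finset.mem_filter] at hu
          exact Finset.mem_filter.2 ⟨hu.1.1, hu.2⟩
        have hm : ∑ x ∈ (X0.filter (fun x => σ^[i] x ≠ x0star)).filter (fun x => σ^[i] x = z), π x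
            ≤ (ρ⁻¹) ^ i * π z :=
          le_trans (Finset.sum_le_sum_of_subset_of_nonneg hsub2 fun y _ _ => (hπpos y).le)
            (hT i z hzne)
        calc (∑ x ∈ (X0.filter (fun x => σ^[i] x ≠ x0star)).filter (fun x => σ^[i] x = z), π x)
              * ((s⁻¹) ^ i * d z)
            ≤ ((ρ⁻¹) ^ i * π z) * ((s⁻¹) ^ i * d z) := by
              apply mul_le_mul_of_nonneg_right hm
              exact mul_nonneg (by positivity) (hdnn z)
          _ = ((s⁻¹) ^ i * (ρ⁻¹) ^ i) * (π z * d z) := by ring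
          _ = s ^ i * (π z * d z) := by rw [hscoef i]
      calc ∑ z ∈ Z, ∑ x ∈ (X0.filter (fun x => σ^[i] x ≠ x0star)).filter (fun x => σ^[i] x = z),
            π x * ((s⁻¹) ^ i * d (σ^[i] x))
          ≤ ∑ z ∈ Z, s ^ i * (π z * d z) := Finset.sum_le_sum hfib
        _ = s ^ i * W := by rw [← Finset.mul_sum]
    calc ∑ i ∈ Finset.range K, ∑ x ∈ X0,
          (if σ^[i] x ≠ x0star then π x * ((s⁻¹) ^ i * d (σ^[i] x)) else 0)
        ≤ ∑ i ∈ Finset.range K, s ^ i * W := Finset.sum_le_sum hinner2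
      _ = (∑ i ∈ Finset.range K, s ^ i) * W := by rw [Finset.sum_mul]
      _ ≤ (1 - s)⁻¹ * W := mul_le_mul_of_nonneg_right (geom_sum_le_inv' hs0.le hs1 K) hWnn
  -- V bound
  have hV : ∑ x ∈ X0, π x * (f x - f x0star) ^ 2 ≤ (1 - s)⁻¹ * ((1 - s)⁻¹ * W) := by
    calc ∑ x ∈ X0, π x * (f x - f x0star) ^ 2
        ≤ ∑ x ∈ X0, π x * ((1 - s)⁻¹ * ∑ i ∈ Finset.range (kk x), (s⁻¹) ^ i * d (σ^[i] x)) :=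
          Finset.sum_le_sum fun x hx => mul_le_mul_of_nonneg_left (hCS x hx) (hπpos x).le
      _ = (1 - s)⁻¹ * ∑ x ∈ X0, π x * ∑ i ∈ Finset.range (kk x), (s⁻¹) ^ i * d (σ^[i] x) := by
          rw [Finset.mul_sum]
          exact Finset.sum_congr rfl fun x _ => by ring
      _ ≤ (1 - s)⁻¹ * ((1 - s)⁻¹ * W) :=
          mul_le_mul_of_nonneg_left hB (by positivity)
  -- W ≤ M * S_P
  set SP : ℝ := ∑ x ∈ X0, ∑ y ∈ X0, (f x - f y) ^ 2 * rwMH π N x y * π x with hSP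
  have hQnn : ∀ x y, 0 ≤ rwMH π N x y := rwMH_nonneg' π hπpos N hNirr
  have hSPnn : (0:ℝ) ≤ SP := by
    apply Finset.sum_nonneg
    intro x _
    apply Finset.sum_nonneg
    intro y _
    exact mul_nonneg (mul_nonneg (sq_nonneg _) (hQnn x y)) (hπpos x).le
  have hQσ : ∀ z ∈ Z, (M:ℝ)⁻¹ ≤ rwMH π N z (σ z) := by
    intro z hz
    obtain ⟨hzne, hzX0⟩ := Finset.mem_erase.1 hz
    have hN1 : σ z ∈ N z := hσN z hzX0 hzne
    have hN2 : z ∈ N (σ z) := hNsym z (σ z) hN1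
    have hc1 : 0 < (N z).card := Finset.card_pos.2 ⟨_, hN1⟩
    have hc2 : 0 < (N (σ z)).card := Finset.card_pos.2 ⟨_, hN2⟩
    have hc1R : (0:ℝ) < ((N z).card : ℝ) := by exact_mod_cast hc1
    have hc2R : (0:ℝ) < ((N (σ z)).card : ℝ) := by exact_mod_cast hc2
    rw [rwMH_apply_mem' π N hN1]
    apply le_min
    · apply inv_anti₀ hc1R
      exact_mod_cast hMcard z
    · rw [le_div_iff₀ (mul_pos (hπpos z) hc2R)]
      have hg := hσg z hzX0 hzne
      have hcM : ((N (σ z)).card : ℝ) ≤ (M:ℝ) := by exact_mod_cast hMcard (σ z)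
      have step1 : (M:ℝ)⁻¹ * (π z * ((N (σ z)).card : ℝ)) ≤ (M:ℝ)⁻¹ * (π z * M) := by
        apply mul_le_mul_of_nonneg_left ?_ (by positivity)
        exact mul_le_mul_of_nonneg_left hcM (hπpos z).le
      have step2 : (M:ℝ)⁻¹ * (π z * M) = π z := by
        field_simp
      have step3 : π z ≤ ρ * M * π z := by
        nlinarith [hπpos z]
      linarith [hg]
  have hWSP : W ≤ (M:ℝ) * SP := by
    have h1 : ∀ z ∈ Z, π z * d z ≤ (M:ℝ) * (d z * rwMH π N z (σ z) * π z) := by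
      intro z hz
      have h2 := hQσ z hz
      have h3 : 1 ≤ (M:ℝ) * rwMH π N z (σ z) := by
        calc (1:ℝ) = (M:ℝ) * (M:ℝ)⁻¹ := by field_simp
          _ ≤ (M:ℝ) * rwMH π N z (σ z) := mul_le_mul_of_nonneg_left h2 (by positivity)
      nlinarith [hdnn z, hπpos z, mul_nonneg (hdnn z) (hπpos z).le]
    calc W ≤ ∑ z ∈ Z, (M:ℝ) * (d z * rwMH π N z (σ z) * π z) := Finset.sum_le_sum h1
      _ = (M:ℝ) * ∑ z ∈ Z, d z * rwMH π N z (σ z) * π z := by rw [Finset.mul_sum]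
      _ ≤ (M:ℝ) * SP := by
          apply mul_le_mul_of_nonneg_left ?_ (by positivity)
          have h2 : ∀ z ∈ Z, d z * rwMH π N z (σ z) * π z
              ≤ ∑ y ∈ X0, (f z - f y) ^ 2 * rwMH π N z y * π z := by
            intro z hz
            have h3 : d z * rwMH π N z (σ z) * π z
                = (f z - f (σ z)) ^ 2 * rwMH π N z (σ z) * π z := by rw [hd]
            rw [h3]
            exact Finset.single_le_sum
              (f := fun y => (f z - f y) ^ 2 * rwMH π N z y * π z)
              (fun y _ => mul_nonneg (mul_nonneg (sq_nonneg _) (hQnn z y)) (hπpos z).le)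
              (hσX0 z)
          calc ∑ z ∈ Z, d z * rwMH π N z (σ z) * π z
              ≤ ∑ z ∈ Z, ∑ y ∈ X0, (f z - f y) ^ 2 * rwMH π N z y * π z :=
                Finset.sum_le_sum h2
            _ ≤ SP := by
                apply Finset.sum_le_sum_of_subset_of_nonneg (Finset.erase_subset _ _)
                intro x _ _
                exact Finset.sum_nonneg fun y _ =>
                  mul_nonneg (mul_nonneg (sq_nonneg _) (hQnn x y)) (hπpos x).le
  -- final combination
  have hA1 : ∑ x ∈ X0, ∑ y ∈ X0, (f x - f y) ^ 2 * π x * π y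
      = ∑ x ∈ X0, ∑ y ∈ X0, ((f x - f x0star) - (f y - f x0star)) ^ 2 * π x * π y :=
    Finset.sum_congr rfl fun x _ => Finset.sum_congr rfl fun y _ => by ring
  have hpe : ∑ x ∈ X0, ∑ y ∈ X0, ((f x - f x0star) - (f y - f x0star)) ^ 2 * π x * π y
      = 2 * (∑ x ∈ X0, π x) * (∑ x ∈ X0, π x * (f x - f x0star) ^ 2)
        - 2 * (∑ x ∈ X0, π x * (f x - f x0star)) ^ 2 :=
    pair_expand' X0 π (fun x => f x - f x0star)
  have hVnn : (0:ℝ) ≤ ∑ x ∈ X0, π x * (f x - f x0star) ^ 2 :=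
    Finset.sum_nonneg fun x _ => mul_nonneg (hπpos x).le (sq_nonneg _)
  have hfinal : ∑ x ∈ X0, ∑ y ∈ X0, (f x - f y) ^ 2 * π x * π y
      ≤ 2 * ∑ x ∈ X0, π x * (f x - f x0star) ^ 2 := by
    rw [hA1, hpe]
    nlinarith [sq_nonneg (∑ x ∈ X0, π x * (f x - f x0star)), hVnn,
      mul_nonneg (sub_nonneg.2 hπle1) hVnn]
  have h10 : ∑ x ∈ X0, π x * (f x - f x0star) ^ 2
      ≤ (1 - s)⁻¹ * ((1 - s)⁻¹ * ((M:ℝ) * SP)) := by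
    refine hV.trans ?_
    apply mul_le_mul_of_nonneg_left ?_ (by positivity)
    exact mul_le_mul_of_nonneg_left hWSP (by positivity)
  have heq : 2 * ((1 - s)⁻¹ * ((1 - s)⁻¹ * ((M:ℝ) * SP))) = (2 * M / (1 - s) ^ 2) * SP := by
    field_simp
  calc ∑ x ∈ X0, ∑ y ∈ X0, (f x - f y) ^ 2 * π x * π y
      ≤ 2 * ∑ x ∈ X0, π x * (f x - f x0star) ^ 2 := hfinal
    _ ≤ 2 * ((1 - s)⁻¹ * ((1 - s)⁻¹ * ((M:ℝ) * SP))) := by linarith [h10]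
    _ = (2 * M / (1 - s) ^ 2) * SP := heq

end StmtSixPartA

set_option maxHeartbeats 1600000 in
theorem stmt6 {X : Type*} [Fintype X] [DecidableEq X] [Nonempty X]
    (π : X → ℝ) (hπpos : ∀ x, 0 < π x) (hπsum : ∑ x, π x = 1)
    (N : X → Finset X)
    (hNirr : ∀ x, x ∉ N x)
    (hNsym : ∀ x y, y ∈ N x → x ∈ N y)
    (hNconn : ∀ x y : X, Relation.ReflTransGen (fun a b => b ∈ N a) x y)
    (X0 : Finset X) (x0 : X) (hx0 : x0 ∈ X0)
    (x0star : X) (hx0star : x0star ∈ X0) (hx0max : ∀ x ∈ X0, π x ≤ π x0star)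
    (η ε : ℝ) (hη0 : 0 < η) (hη1 : η < 1) (hε0 : 0 < ε) (hε1 : ε < 1 / 2)
    (ρ : ℝ) (hρdef : ρ = RvalRes π N X0 x0star / (Mmax N : ℝ)) (hρ : 1 < ρ)
    (hwarm : η ≤ π x0)
    (hmass : 1 - ε ^ 2 * η ^ 2 / 5 ≤ ∑ x ∈ X0, π x) :
    (mixTimeFrom (lazyM (rwMH π N)) π ε x0 : ℝ) ≤
      cFun ρ * (Mmax N : ℝ) * Real.log (1 / (2 * ε ^ 2 * η ^ 2)) := by
  classical
  set Q : Matrix X X ℝ := rwMH π N with hQdef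
  set P : Matrix X X ℝ := lazyM Q with hPdef
  set M : ℕ := Mmax N with hMdef
  have hρ0 : (0:ℝ) < ρ := by linarith
  -- M ≥ 1
  have hMne : (M:ℝ) ≠ 0 := by
    intro h
    rw [h, div_zero] at hρdef
    rw [hρdef] at hρ
    norm_num at hρ
  have hM1 : 1 ≤ M := by
    by_contra h
    push_neg at h
    interval_cases M
    · exact hMne (by norm_num)
  have hMR : (1:ℝ) ≤ (M:ℝ) := by exact_mod_cast hM1
  have hMR0 : (0:ℝ) < (M:ℝ) := by linarith
  have hMcard : ∀ x : X, (N x).card ≤ M := fun x =>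
    Finset.le_sup (f := fun y => (N y).card) (Finset.mem_univ x)
  have hRM : RvalRes π N X0 x0star = ρ * M := by
    rw [hρdef]
    field_simp
  -- s
  set s : ℝ := ρ ^ (-(2:ℝ)⁻¹) with hsdef
  have hs0 : 0 < s := Real.rpow_pos_of_pos hρ0 _
  have hs1 : s < 1 := Real.rpow_lt_one_of_one_lt_of_neg hρ (by norm_num)
  have hs2 : s ^ 2 = ρ⁻¹ := by
    rw [hsdef, sq, ← Real.rpow_add hρ0,
      show (-(2:ℝ)⁻¹ + -(2:ℝ)⁻¹) = (-1 : ℝ) by norm_num, Real.rpow_neg_one]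
  have h1s : (0:ℝ) < 1 - s := by linarith
  have hρM1 : (1:ℝ) < ρ * M := by nlinarith
  -- choice of σ
  have hchoice : ∀ x, x ∈ X0 → x ≠ x0star → ∃ y, y ∈ X0 ∧ y ∈ N x ∧ ρ * M * π x ≤ π y := by
    intro x hx hne
    set Sx : Set ℝ := (fun y => π y / π x) '' ((N x ∩ X0 : Finset X) : Set X) with hSx
    have hfin : Sx.Finite := Set.Finite.image _ (Finset.finite_toSet _)
    have hmem : sSup Sx ∈ (fun x => sSup ((fun y => π y / π x) ''
        ((N x ∩ X0 : Finset X) : Set X))) '' {x | x ∈ X0 ∧ x ≠ x0star} :=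
      ⟨x, ⟨hx, hne⟩, rfl⟩
    have hbdd : BddBelow ((fun x => sSup ((fun y => π y / π x) ''
        ((N x ∩ X0 : Finset X) : Set X))) '' {x | x ∈ X0 ∧ x ≠ x0star}) :=
      (Set.toFinite _).bddBelow
    have hle : RvalRes π N X0 x0star ≤ sSup Sx := csInf_le hbdd hmem
    rw [hRM] at hle
    have hSne : Sx.Nonempty := by
      by_contra h
      rw [Set.not_nonempty_iff_eq_empty] at h
      rw [h, Real.sSup_empty] at hle
      nlinarith [hπpos x]
    have hsup_mem : sSup Sx ∈ Sx := hSne.csSup_mem hfin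
    obtain ⟨y, hy, hyeq⟩ := hsup_mem
    rw [Finset.coe_inter, Set.mem_inter_iff, Finset.mem_coe, Finset.mem_coe] at hy
    refine ⟨y, hy.2, hy.1, ?_⟩
    rw [← hyeq] at hle
    exact (le_div_iff₀ (hπpos x)).1 hle
  have hσex : ∀ x : X, ∃ y, y ∈ X0 ∧ ((x ∈ X0 ∧ x ≠ x0star) → (y ∈ N x ∧ ρ * M * π x ≤ π y))
      ∧ (¬(x ∈ X0 ∧ x ≠ x0star) → y = x0star) := by
    intro x
    by_cases h : x ∈ X0 ∧ x ≠ x0star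
    · obtain ⟨y, h1, h2, h3⟩ := hchoice x h.1 h.2
      exact ⟨y, h1, fun _ => ⟨h2, h3⟩, fun h' => absurd h h'⟩
    · exact ⟨x0star, hx0star, fun h' => absurd h' h, fun _ => rfl⟩
  choose σ hσ1 hσ2 hσ3 using hσex
  have hσN : ∀ x, x ∈ X0 → x ≠ x0star → σ x ∈ N x := fun x hx hne => (hσ2 x ⟨hx, hne⟩).1
  have hσg : ∀ x, x ∈ X0 → x ≠ x0star → ρ * M * π x ≤ π (σ x) :=
    fun x hx hne => (hσ2 x ⟨hx, hne⟩).2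
  have hσstar : σ x0star = x0star := hσ3 x0star (by simp)
  have hπle1 : ∑ x ∈ X0, π x ≤ 1 := by
    rw [← hπsum]
    exact Finset.sum_le_sum_of_subset_of_nonneg (Finset.subset_univ X0)
      fun y _ _ => (hπpos y).le
  have hA := fun f : X → ℝ => partA π hπpos N hNirr hNsym X0 x0star hπle1 M hMcard hM1 ρ s hρ
    hs0 hs1 hs2 σ hσ1 hσN hσg hσstar f
  -- transition matrix facts
  have hQ0 : ∀ x y, 0 ≤ Q x y := rwMH_nonneg' π hπpos N hNirr
  have hQrow : ∀ x, ∑ y, Q x y = 1 := rwMH_rowsum' π N hNirr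
  have hQrev : ∀ x y, π x * Q x y = π y * Q y x := rwMH_rev' π hπpos N hNsym
  have hP0 : ∀ x y, 0 ≤ P x y := lazy_nonneg' Q hQ0
  have hProw : ∀ x, ∑ y, P x y = 1 := lazy_rowsum' Q hQrow
  have hPrev : ∀ x y, π x * P x y = π y * P y x := lazy_rev' π Q hQrev
  -- density and chi-square
  set hfun : ℕ → X → ℝ := fun t y => (P ^ t) x0 y / π y with hhdef
  set a : ℕ → ℝ := fun t => ∑ y, π y * (hfun t y - 1) ^ 2 with hadef
  have ha_nn : ∀ t, 0 ≤ a t := fun t =>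
    Finset.sum_nonneg fun y _ => mul_nonneg (hπpos y).le (sq_nonneg _)
  have hrec : ∀ t y, hfun (t+1) y = ∑ x, P y x * hfun t x := by
    intro t y
    have h1 : (P ^ (t+1)) x0 y = ∑ x, (P ^ t) x0 x * P x y := by
      rw [pow_succ, Matrix.mul_apply]
    simp only [hhdef]
    rw [h1, Finset.sum_div]
    refine Finset.sum_congr rfl fun x _ => ?_
    have key : P x y / π y = P y x / π x := by
      rw [div_eq_div_iff (hπpos y).ne' (hπpos x).ne']
      linear_combination hPrev x y
    rw [mul_div_assoc, key]
    ring
  have hbound : ∀ t y, 0 ≤ hfun t y ∧ hfun t y ≤ 1/η := by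
    intro t
    induction t with
    | zero =>
      intro y
      simp only [hhdef, pow_zero]
      rcases eq_or_ne x0 y with rfl | hne
      · rw [Matrix.one_apply_eq]
        constructor
        · exact (div_pos one_pos (hπpos x0)).le
        · rw [div_le_div_iff₀ (hπpos x0) hη0]
          nlinarith [hwarm]
      · rw [Matrix.one_apply_ne hne, zero_div]
        constructor
        · exact le_refl 0
        · positivity
    | succ t ih =>
      intro y
      rw [hrec t y]
      constructor
      · exact Finset.sum_nonneg fun x _ => mul_nonneg (hP0 y x) (ih x).1
      · calc ∑ x, P y x * hfun t x ≤ ∑ x, P y x * (1/η) :=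
            Finset.sum_le_sum fun x _ => mul_le_mul_of_nonneg_left (ih x).2 (hP0 y x)
          _ = 1/η := by rw [← Finset.sum_mul, hProw, one_mul]
  have hmean : ∀ t, ∑ y, π y * (hfun t y - 1) = 0 := by
    intro t
    have h1 : ∑ y, π y * hfun t y = 1 := by
      have h2 : ∀ y, π y * hfun t y = (P ^ t) x0 y := by
        intro y
        simp only [hhdef]
        rw [mul_div_cancel₀ _ (hπpos y).ne']
      rw [Finset.sum_congr rfl fun y _ => h2 y]
      exact pow_rowsum' P hProw t x0
    simp only [mul_sub, mul_one]
    rw [Finset.sum_sub_distrib, h1, hπsum, sub_self]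
  -- constants
  have hcs : cFun ρ = 4 / (1-s)^3 := by
    rw [cFun, hsdef]
  have hcpos : 0 < cFun ρ := by
    rw [hcs]
    positivity
  set lam : ℝ := (1-s)^3 / (4*M) with hlam
  have hlam0 : 0 < lam := by rw [hlam]; positivity
  have hlam14 : lam ≤ 4⁻¹ := by
    rw [hlam]
    have h1 : (1-s)^3 ≤ 1 := by nlinarith [h1s, hs0, hs1]
    have h2 : (4:ℝ) ≤ 4*M := by linarith
    calc (1-s)^3 / (4*M) ≤ 1 / 4 := div_le_div₀ (by norm_num) h1 (by norm_num) h2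
      _ = 4⁻¹ := by norm_num
  have hlam1 : lam ≤ 1 := by linarith
  have hlamc : lam * (cFun ρ * M) = 1 := by
    rw [hlam, hcs]
    field_simp
  set b : ℝ := 4*ε^2/5 with hb
  have hmass' : ∑ x ∈ Finset.univ \ X0, π x ≤ ε^2*η^2/5 := by
    have h1 : ∑ x ∈ Finset.univ \ X0, π x + ∑ x ∈ X0, π x = ∑ x, π x :=
      Finset.sum_sdiff (Finset.subset_univ X0)
    rw [hπsum] at h1
    linarith [hmass]
  -- one-step inequality
  have hstep : ∀ t, a (t+1) ≤ (1-lam) * a t + lam * b := by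
    intro t
    set f : X → ℝ := fun y => hfun t y - 1 with hf
    have hft : ∀ y, hfun (t+1) y - 1 = ∑ x, P y x * f x := by
      intro y
      rw [hrec t y]
      simp only [hf, mul_sub, mul_one]
      rw [Finset.sum_sub_distrib, hProw y]
    have ha1 : a (t+1) = ∑ y, π y * (∑ x, P y x * f x) ^ 2 := by
      simp only [hadef]
      exact Finset.sum_congr rfl fun y _ => by rw [hft y]
    have h2 : a (t+1) ≤ ∑ y, π y * (∑ x, P y x * f x) * f y := by
      rw [ha1]
      have := lazy_step' π (fun x => (hπpos x).le) Q hQ0 hQrow hQrev f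
      rw [← hPdef] at this
      exact this
    have h3 := dirichlet_id' π P hProw hPrev f
    set D : ℝ := 2⁻¹ * ∑ x, ∑ y, (f x - f y) ^ 2 * P x y * π x with hD
    have hat : a t = ∑ y, π y * f y ^ 2 := by
      simp only [hadef, hf]
    have h4 : a (t+1) ≤ a t - D := by
      rw [hat, hD]
      linarith [h2, h3]
    have hD0 : 0 ≤ D := by
      rw [hD]
      apply mul_nonneg (by norm_num)
      apply Finset.sum_nonneg
      intro x _
      apply Finset.sum_nonneg
      intro y _
      exact mul_nonneg (mul_nonneg (sq_nonneg _) (hP0 x y)) (hπpos x).le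
    -- lower bound for D
    have h5 : a t ≤ cFun ρ * M * D + b := by
      have hvar : ∑ x, ∑ y, (f x - f y) ^ 2 * π x * π y = 2 * a t := by
        have hpe : ∑ x, ∑ y, (f x - f y) ^ 2 * π x * π y
            = 2 * (∑ x, π x) * (∑ x, π x * f x ^ 2) - 2 * (∑ x, π x * f x) ^ 2 :=
          pair_expand' Finset.univ π f
        have hm0 : ∑ x, π x * f x = 0 := by
          simp only [hf]
          exact hmean t
        rw [hpe, hπsum, hm0, hat]
        ring
      -- splitting
      have hfb : ∀ y, |f y| ≤ 1/η := by
        intro y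
        have h6 := hbound t y
        rw [abs_le]
        constructor
        · simp only [hf]
          have h7 : (1:ℝ) ≤ 1/η := by
            rw [le_div_iff₀ hη0]
            linarith
          linarith [h6.1]
        · simp only [hf]
          linarith [h6.2, hη0]
      have hterm : ∀ x y, (f x - f y) ^ 2 * π x * π y ≤ (2/η)^2 * (π x * π y) := by
        intro x y
        have h6 : |f x - f y| ≤ 2/η := by
          calc |f x - f y| ≤ |f x| + |f y| := abs_sub _ _
            _ ≤ 1/η + 1/η := add_le_add (hfb x) (hfb y)
            _ = 2/η := by ring
        have h7 : (f x - f y) ^ 2 ≤ (2/η)^2 := by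
          rw [← sq_abs (f x - f y)]
          apply pow_le_pow_left₀ (abs_nonneg _) h6
        calc (f x - f y) ^ 2 * π x * π y ≤ (2/η)^2 * π x * π y := by
              apply mul_le_mul_of_nonneg_right ?_ (hπpos y).le
              exact mul_le_mul_of_nonneg_right h7 (hπpos x).le
          _ = (2/η)^2 * (π x * π y) := by ring
      have htail : ∀ (S T : Finset X), (∑ x ∈ S, π x) ≤ 1 → (∑ y ∈ T, π y) ≤ ε^2*η^2/5 →
          ∑ x ∈ S, ∑ y ∈ T, (f x - f y) ^ 2 * π x * π y ≤ 4*ε^2/5 := by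
        intro S T hS hT
        have h6 : ∑ x ∈ S, ∑ y ∈ T, (f x - f y) ^ 2 * π x * π y
            ≤ ∑ x ∈ S, ∑ y ∈ T, (2/η)^2 * (π x * π y) :=
          Finset.sum_le_sum fun x _ => Finset.sum_le_sum fun y _ => hterm x y
        have h7 : ∑ x ∈ S, ∑ y ∈ T, (2/η)^2 * (π x * π y)
            = (2/η)^2 * ((∑ x ∈ S, π x) * (∑ y ∈ T, π y)) := by
          rw [Finset.sum_mul_sum, Finset.mul_sum]
          exact Finset.sum_congr rfl fun x _ => by rw [Finset.mul_sum]
        have h8 : (∑ x ∈ S, π x) * (∑ y ∈ T, π y) ≤ 1 * (ε^2*η^2/5) := by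
          apply mul_le_mul hS hT ?_ (by norm_num)
          exact Finset.sum_nonneg fun y _ => (hπpos y).le
        have h9 : (2/η)^2 * ((∑ x ∈ S, π x) * (∑ y ∈ T, π y)) ≤ (2/η)^2 * (1*(ε^2*η^2/5)) :=
          mul_le_mul_of_nonneg_left h8 (by positivity)
        have h10 : (2/η)^2 * (1*(ε^2*η^2/5)) = 4*ε^2/5 := by
          field_simp
          ring
        linarith
      have htailT : ∀ y ∈ Finset.univ \ X0, ∀ x : X, True := fun _ _ _ => trivial
      have hsym : ∀ (S T : Finset X), ∑ x ∈ S, ∑ y ∈ T, (f x - f y) ^ 2 * π x * π y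
          = ∑ y ∈ T, ∑ x ∈ S, (f y - f x) ^ 2 * π y * π x := by
        intro S T
        rw [Finset.sum_comm]
        exact Finset.sum_congr rfl fun y _ => Finset.sum_congr rfl fun x _ => by ring
      have hsplit : ∑ x, ∑ y, (f x - f y) ^ 2 * π x * π y
          ≤ (∑ x ∈ X0, ∑ y ∈ X0, (f x - f y) ^ 2 * π x * π y) + 8*ε^2/5 := by
        have e1 : ∑ x, ∑ y, (f x - f y) ^ 2 * π x * π y
            = (∑ x ∈ Finset.univ \ X0, ∑ y, (f x - f y) ^ 2 * π x * π y)
              + ∑ x ∈ X0, ∑ y, (f x - f y) ^ 2 * π x * π y :=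
          (Finset.sum_sdiff (Finset.subset_univ X0)).symm
        have e2 : ∀ x : X, ∑ y, (f x - f y) ^ 2 * π x * π y
            = (∑ y ∈ Finset.univ \ X0, (f x - f y) ^ 2 * π x * π y)
              + ∑ y ∈ X0, (f x - f y) ^ 2 * π x * π y :=
          fun x => (Finset.sum_sdiff (Finset.subset_univ X0)).symm
        have t1 : ∑ x ∈ Finset.univ \ X0, ∑ y, (f x - f y) ^ 2 * π x * π y ≤ 4*ε^2/5 := by
          have := hsym (Finset.univ \ X0) Finset.univ
          rw [this]
          exact htail Finset.univ (Finset.univ \ X0) (le_of_eq hπsum) hmass'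
        have t2 : ∑ x ∈ X0, ∑ y ∈ Finset.univ \ X0, (f x - f y) ^ 2 * π x * π y ≤ 4*ε^2/5 :=
          htail X0 (Finset.univ \ X0) hπle1 hmass'
        calc ∑ x, ∑ y, (f x - f y) ^ 2 * π x * π y
            = (∑ x ∈ Finset.univ \ X0, ∑ y, (f x - f y) ^ 2 * π x * π y)
              + ∑ x ∈ X0, ((∑ y ∈ Finset.univ \ X0, (f x - f y) ^ 2 * π x * π y)
                + ∑ y ∈ X0, (f x - f y) ^ 2 * π x * π y) := by
              rw [e1]
              exact congrArg _ (Finset.sum_congr rfl fun x _ => e2 x)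
          _ = (∑ x ∈ Finset.univ \ X0, ∑ y, (f x - f y) ^ 2 * π x * π y)
              + ((∑ x ∈ X0, ∑ y ∈ Finset.univ \ X0, (f x - f y) ^ 2 * π x * π y)
                + ∑ x ∈ X0, ∑ y ∈ X0, (f x - f y) ^ 2 * π x * π y) := by
              rw [Finset.sum_add_distrib]
          _ ≤ (∑ x ∈ X0, ∑ y ∈ X0, (f x - f y) ^ 2 * π x * π y) + 8*ε^2/5 := by
              linarith [t1, t2]
      have hSπ := hA f
      have hSPD : ∑ x ∈ X0, ∑ y ∈ X0, (f x - f y) ^ 2 * Q x y * π x ≤ 4 * D := by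
        have hpoint : ∀ x y : X, (f x - f y) ^ 2 * Q x y * π x
            = 2 * ((f x - f y) ^ 2 * P x y * π x) := by
          intro x y
          have hPxy : P x y = 2⁻¹ * (Q x y + (1 : Matrix X X ℝ) x y) := by
            rw [hPdef]
            simp [lazyM, Matrix.smul_apply, Matrix.add_apply]
          rcases eq_or_ne x y with rfl | hne
          · rw [sub_self]
            ring
          · rw [hPxy, Matrix.one_apply_ne hne]
            ring
        have h6 : ∑ x ∈ X0, ∑ y ∈ X0, (f x - f y) ^ 2 * Q x y * π x
            = 2 * ∑ x ∈ X0, ∑ y ∈ X0, (f x - f y) ^ 2 * P x y * π x := by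
          rw [Finset.mul_sum]
          refine Finset.sum_congr rfl fun x _ => ?_
          rw [Finset.mul_sum]
          exact Finset.sum_congr rfl fun y _ => hpoint x y
        have h7 : ∑ x ∈ X0, ∑ y ∈ X0, (f x - f y) ^ 2 * P x y * π x
            ≤ ∑ x, ∑ y, (f x - f y) ^ 2 * P x y * π x := by
          have hinner : ∀ x : X, ∑ y ∈ X0, (f x - f y) ^ 2 * P x y * π x
              ≤ ∑ y, (f x - f y) ^ 2 * P x y * π x := fun x =>
            Finset.sum_le_sum_of_subset_of_nonneg (Finset.subset_univ X0)
              fun y _ _ => mul_nonneg (mul_nonneg (sq_nonneg _) (hP0 x y)) (hπpos x).le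
          calc ∑ x ∈ X0, ∑ y ∈ X0, (f x - f y) ^ 2 * P x y * π x
              ≤ ∑ x ∈ X0, ∑ y, (f x - f y) ^ 2 * P x y * π x :=
                Finset.sum_le_sum fun x _ => hinner x
            _ ≤ ∑ x, ∑ y, (f x - f y) ^ 2 * P x y * π x :=
                Finset.sum_le_sum_of_subset_of_nonneg (Finset.subset_univ X0)
                  fun x _ _ => Finset.sum_nonneg fun y _ =>
                    mul_nonneg (mul_nonneg (sq_nonneg _) (hP0 x y)) (hπpos x).le
        rw [h6, hD]
        linarith [h7]
      -- combine : 2 a t ≤ (2M/(1-s)^2) * 4D + 8ε²/5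
      have h8 : 2 * a t ≤ (2*M/(1-s)^2) * (4*D) + 8*ε^2/5 := by
        have h9 : ∑ x ∈ X0, ∑ y ∈ X0, (f x - f y) ^ 2 * π x * π y
            ≤ (2*M/(1-s)^2) * (4*D) := by
          refine hSπ.trans ?_
          apply mul_le_mul_of_nonneg_left hSPD (by positivity)
        linarith [hvar, hsplit, h9]
      have h10 : (2*(M:ℝ)/(1-s)^2) * (4*D) ≤ (4*M/(1-s)^3) * (2*D) := by
        have h11 : (2*(M:ℝ)/(1-s)^2) * 4 ≤ (4*M/(1-s)^3) * 2 := by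
          rw [div_mul_eq_mul_div, div_mul_eq_mul_div, div_le_div_iff₀ (by positivity) (by positivity)]
          have h12 : (1-s)^3 ≤ (1-s)^2 := by nlinarith [h1s, hs0, hs1]
          nlinarith [hMR0, h12]
        calc (2*(M:ℝ)/(1-s)^2) * (4*D) = ((2*(M:ℝ)/(1-s)^2) * 4) * D := by ring
          _ ≤ ((4*M/(1-s)^3) * 2) * D := mul_le_mul_of_nonneg_right h11 hD0
          _ = (4*M/(1-s)^3) * (2*D) := by ring
      have h13 : cFun ρ * M = 4*M/(1-s)^3 := by
        rw [hcs]
        ring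
      have h14 : 2 * a t ≤ (cFun ρ * M) * (2*D) + 8*ε^2/5 := by
        rw [h13]
        linarith [h8, h10]
      rw [hb]
      linarith [h14]
    -- combine h4 and h5
    have h15 : lam * (a t - b) ≤ D := by
      have h16 : a t - b ≤ cFun ρ * M * D := by linarith [h5]
      have h17 : lam * (a t - b) ≤ lam * (cFun ρ * M * D) :=
        mul_le_mul_of_nonneg_left h16 hlam0.le
      calc lam * (a t - b) ≤ lam * (cFun ρ * M * D) := h17
        _ = (lam * (cFun ρ * M)) * D := by ring
        _ = D := by rw [hlamc, one_mul]
    linarith [h4, h15]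
  -- closed form
  have hind : ∀ t, a t ≤ (1-lam)^t * a 0 + b := by
    intro t
    induction t with
    | zero =>
      simp only [pow_zero, one_mul]
      have hb0 : (0:ℝ) ≤ b := by rw [hb]; positivity
      linarith
    | succ t ih =>
      calc a (t+1) ≤ (1-lam) * a t + lam * b := hstep t
        _ ≤ (1-lam) * ((1-lam)^t * a 0 + b) + lam * b := by
            refine add_le_add ?_ le_rfl
            exact mul_le_mul_of_nonneg_left ih (by linarith)
        _ = (1-lam)^(t+1) * a 0 + b := by ring
  -- initial bound
  have ha0 : a 0 ≤ 1/η := by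
    have e0 : a 0 = ∑ y, π y * (hfun 0 y - 1) ^ 2 := rfl
    have hx0t : π x0 * (hfun 0 x0 - 1) ^ 2 = (1 - π x0)^2 / π x0 := by
      simp only [hhdef, pow_zero, Matrix.one_apply_eq]
      field_simp [(hπpos x0).ne']
    have hrest : ∑ y ∈ Finset.univ.erase x0, π y * (hfun 0 y - 1) ^ 2
        = ∑ y ∈ Finset.univ.erase x0, π y := by
      refine Finset.sum_congr rfl fun y hy => ?_
      have hne : x0 ≠ y := fun h => (Finset.mem_erase.1 hy).1 h.symm
      simp only [hhdef, pow_zero, Matrix.one_apply_ne hne, zero_div]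
      ring
    have hsum_erase : ∑ y ∈ Finset.univ.erase x0, π y = 1 - π x0 := by
      have := Finset.add_sum_erase Finset.univ π (Finset.mem_univ x0)
      rw [hπsum] at this
      linarith
    have hsplit0 : a 0 = π x0 * (hfun 0 x0 - 1) ^ 2
        + ∑ y ∈ Finset.univ.erase x0, π y * (hfun 0 y - 1) ^ 2 := by
      rw [e0, ← Finset.add_sum_erase Finset.univ _ (Finset.mem_univ x0)]
    rw [hsplit0, hx0t, hrest, hsum_erase]
    have hp1 : π x0 ≤ 1 := by
      rw [← hπsum]
      exact Finset.single_le_sum (fun y _ => (hπpos y).le) (Finset.mem_univ x0)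
    have hpp : 0 < π x0 := hπpos x0
    have heq2 : (1 - π x0)^2/π x0 + (1 - π x0) = (1 - π x0)/π x0 := by
      field_simp
      ring
    rw [heq2, div_le_div_iff₀ hpp hη0]
    nlinarith [hwarm]
  -- final time
  set L : ℝ := Real.log (1/(2*ε^2*η^2)) with hL
  have hηε1 : 2*ε^2*η^2 < 1 := by
    have h1 : ε^2 < 1/4 := by nlinarith [hε0, hε1]
    have h2 : η^2 < 1 := by nlinarith [hη0, hη1]
    nlinarith [pow_pos hε0 2, pow_pos hη0 2]
  have hηε0 : 0 < 2*ε^2*η^2 := by positivity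
  have hL0 : 0 < L := by
    rw [hL]
    apply Real.log_pos
    rw [one_div]
    exact (one_lt_inv₀ hηε0).2 hηε1
  set T : ℕ := ⌊cFun ρ * M * L⌋₊ with hT
  have hcml0 : 0 ≤ cFun ρ * M * L := by positivity
  have hTle : (T:ℝ) ≤ cFun ρ * M * L := Nat.floor_le hcml0
  have hTge : cFun ρ * M * L - 1 < (T:ℝ) := Nat.sub_one_lt_floor _
  have hexp : (1-lam)^T ≤ Real.exp (-(lam*T)) := by
    have h1 : 1 - lam ≤ Real.exp (-lam) := by
      have := Real.add_one_le_exp (-lam)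
      linarith
    calc (1-lam)^T ≤ (Real.exp (-lam))^T := pow_le_pow_left₀ (by linarith) h1 T
      _ = Real.exp (-(lam*T)) := by
          rw [← Real.exp_nat_mul]
          congr 1
          ring
  have hexp14 : Real.exp ((4:ℝ)⁻¹) ≤ 8/5 := by
    have h4 : Real.exp ((4:ℝ)⁻¹) ^ (4:ℕ) = Real.exp 1 := by
      rw [← Real.exp_nat_mul]
      norm_num
    have h5 := Real.exp_one_lt_d9
    by_contra hcon
    push_neg at hcon
    have h6 : ((8:ℝ)/5) ^ (4:ℕ) < Real.exp ((4:ℝ)⁻¹) ^ (4:ℕ) :=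
      pow_lt_pow_left₀ hcon (by norm_num) (by norm_num)
    rw [h4] at h6
    norm_num at h6
    linarith
  have hexp2 : Real.exp (-(lam*T)) ≤ 2*ε^2*η^2 * (8/5) := by
    have h1 : lam * (cFun ρ * M * L) = L := by
      calc lam * (cFun ρ * M * L) = (lam * (cFun ρ * M)) * L := by ring
        _ = L := by rw [hlamc, one_mul]
    have h2 : L - lam ≤ lam * T := by
      have h3 : lam * (cFun ρ * M * L - 1) < lam * T := by
        apply mul_lt_mul_of_pos_left hTge hlam0
      have h4 : lam * (cFun ρ * M * L - 1) = L - lam := by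
        rw [mul_sub, h1, mul_one]
      linarith
    calc Real.exp (-(lam*T)) ≤ Real.exp (-(L - lam)) := Real.exp_le_exp.2 (by linarith)
      _ = Real.exp (-L) * Real.exp lam := by
          rw [← Real.exp_add]
          congr 1
          ring
      _ ≤ Real.exp (-L) * (8/5) := by
          apply mul_le_mul_of_nonneg_left ?_ (Real.exp_pos _).le
          calc Real.exp lam ≤ Real.exp ((4:ℝ)⁻¹) := Real.exp_le_exp.2 hlam14
            _ ≤ 8/5 := hexp14
      _ = 2*ε^2*η^2 * (8/5) := by
          congr 1
          rw [hL, one_div, Real.log_inv, neg_neg, Real.exp_log hηε0]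
  have haT : a T ≤ 4*ε^2 := by
    have h1 := hind T
    have h2 : (1-lam)^T * a 0 ≤ Real.exp (-(lam*T)) * (1/η) := by
      apply mul_le_mul hexp ha0 (ha_nn 0) (Real.exp_pos _).le
    have h3 : Real.exp (-(lam*T)) * (1/η) ≤ (2*ε^2*η^2 * (8/5)) * (1/η) :=
      mul_le_mul_of_nonneg_right hexp2 (by positivity)
    have h4 : (2*ε^2*η^2 * (8/5)) * (1/η) = (16/5)*ε^2*η := by
      field_simp
      ring
    have h5 : (16/5)*ε^2*η ≤ (16/5)*ε^2 := by nlinarith [sq_nonneg ε]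
    have h6 : b = 4*ε^2/5 := hb
    linarith [h1, h2, h3, h5]
  -- TV bound at time T
  have hdiff : ∑ y, |(P^T) x0 y - π y| ≤ 2*ε := by
    have hy : ∀ y, |(P^T) x0 y - π y| = π y * |hfun T y - 1| := by
      intro y
      rw [← abs_of_pos (hπpos y), ← abs_mul]
      congr 1
      simp only [hhdef]
      rw [abs_of_pos (hπpos y), mul_sub, mul_one, mul_div_cancel₀ _ (hπpos y).ne']
    rw [Finset.sum_congr rfl fun y _ => hy y]
    have hCS := Finset.sum_mul_sq_le_sq_mul_sq Finset.univ (fun y => Real.sqrt (π y))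
      (fun y => Real.sqrt (π y) * |hfun T y - 1|)
    have e1 : ∑ y, Real.sqrt (π y) * (Real.sqrt (π y) * |hfun T y - 1|)
        = ∑ y, π y * |hfun T y - 1| :=
      Finset.sum_congr rfl fun y _ => by
        rw [← mul_assoc, Real.mul_self_sqrt (hπpos y).le]
    have e2 : ∑ y, Real.sqrt (π y) ^ 2 = 1 := by
      rw [Finset.sum_congr rfl fun y _ => Real.sq_sqrt (hπpos y).le]
      exact hπsum
    have e3 : ∑ y, (Real.sqrt (π y) * |hfun T y - 1|) ^ 2 = a T := by
      simp only [hadef]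
      refine Finset.sum_congr rfl fun y _ => ?_
      rw [mul_pow, Real.sq_sqrt (hπpos y).le, sq_abs]
    rw [e1, e2, e3, one_mul] at hCS
    have h7 : (∑ y, π y * |hfun T y - 1|) ^ 2 ≤ (2*ε)^2 := by
      calc (∑ y, π y * |hfun T y - 1|) ^ 2 ≤ a T := hCS
        _ ≤ 4*ε^2 := haT
        _ = (2*ε)^2 := by ring
    have h8 : 0 ≤ ∑ y, π y * |hfun T y - 1| :=
      Finset.sum_nonneg fun y _ => mul_nonneg (hπpos y).le (abs_nonneg _)
    have h9 : (0:ℝ) ≤ 2*ε := by linarith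
    exact (pow_le_pow_iff_left₀ h8 h9 (by norm_num)).1 h7
  have htv : tvDist (fun y => (P^T) x0 y) π ≤ ε := by
    rw [tvDist]
    apply ciSup_le
    intro A
    have hzero : ∑ y, ((P^T) x0 y - π y) = 0 := by
      rw [Finset.sum_sub_distrib, pow_rowsum' P hProw T x0, hπsum, sub_self]
    have hsd : ∑ y ∈ Finset.univ \ A, ((P^T) x0 y - π y) + ∑ y ∈ A, ((P^T) x0 y - π y) = 0 := by
      rw [Finset.sum_sdiff (Finset.subset_univ A), hzero]
    have h1 : |∑ y ∈ A, ((P^T) x0 y - π y)| + |∑ y ∈ Finset.univ \ A, ((P^T) x0 y - π y)|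
        ≤ ∑ y, |(P^T) x0 y - π y| := by
      have hA1 : |∑ y ∈ A, ((P^T) x0 y - π y)| ≤ ∑ y ∈ A, |(P^T) x0 y - π y| :=
        Finset.abs_sum_le_sum_abs _ _
      have hA2 : |∑ y ∈ Finset.univ \ A, ((P^T) x0 y - π y)|
          ≤ ∑ y ∈ Finset.univ \ A, |(P^T) x0 y - π y| :=
        Finset.abs_sum_le_sum_abs _ _
      have hA3 : ∑ y ∈ Finset.univ \ A, |(P^T) x0 y - π y| + ∑ y ∈ A, |(P^T) x0 y - π y|
          = ∑ y, |(P^T) x0 y - π y| := Finset.sum_sdiff (Finset.subset_univ A)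
      linarith
    have h2 : |∑ y ∈ A, ((P^T) x0 y - π y)| = |∑ y ∈ Finset.univ \ A, ((P^T) x0 y - π y)| := by
      rw [show ∑ y ∈ A, ((P^T) x0 y - π y) = - ∑ y ∈ Finset.univ \ A, ((P^T) x0 y - π y) by
        linarith [hsd], abs_neg]
    have h3 : |∑ y ∈ A, ((P^T) x0 y - π y)| ≤ ε := by
      linarith [hdiff, h1, h2]
    rw [← Finset.sum_sub_distrib]
    exact h3
  -- conclude
  have hmem : T ∈ {t : ℕ | tvDist (fun y => (P^t) x0 y) π ≤ ε} := htv
  have hfin : mixTimeFrom P π ε x0 ≤ T := Nat.sInf_le hmem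
  calc (mixTimeFrom P π ε x0 : ℝ) ≤ (T:ℝ) := by exact_mod_cast hfin
    _ ≤ cFun ρ * M * L := hTle
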